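/- Let β > 0 and 0 < δ ≤ 1. Then there exists C > 0 such that for all real φ with sin φ ≠ 0 and all real p ≥ δ, |sin φ| + p|cos φ| ≤ (p^{2+β} + C/|sin φ|^β)^{1/(2+β)}. -/

import Mathlib

set_option maxHeartbeats 1000000


theorem stmt15 (β δ : ℝ) (hβ : 0 < β) (hδ0 : 0 < δ) (hδ1 : δ ≤ 1) :
    ∃ C : ℝ, 0 < C ∧ ∀ φ p : ℝ, Real.sin φ ≠ 0 → δ ≤ p →
      |Real.sin φ| + p * |Real.cos φ| ≤
        (p ^ (2 + β) + C / |Real.sin φ| ^ β) ^ (2 + β)⁻¹ := by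
  set M : ℝ := (1 + 2 / δ ^ 2) ^ (1 + β) with hM
  have hM0 : 0 < M := Real.rpow_pos_of_pos (by positivity) _
  set K : ℝ := 2 * (2 + β) * M with hK
  have hK0 : 0 < K := by positivity
  refine ⟨(2 : ℝ) ^ β * K, by positivity, ?_⟩
  intro φ p hsin hp
  set s := |Real.sin φ| with hsdef
  set c := |Real.cos φ| with hcdef
  have hs0 : 0 < s := abs_pos.2 hsin
  have hs1 : s ≤ 1 := Real.abs_sin_le_one φ
  have hc0 : 0 ≤ c := abs_nonneg _
  have hc1 : c ≤ 1 := Real.abs_cos_le_one φ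
  have hp0 : 0 < p := lt_of_lt_of_le hδ0 hp
  have hpyth : s ^ 2 + c ^ 2 = 1 := by
    rw [hsdef, hcdef, sq_abs, sq_abs, Real.sin_sq_add_cos_sq]
  have hα0 : (0:ℝ) < 2 + β := by linarith
  have hCs : 0 ≤ (2 : ℝ) ^ β * K / s ^ β := by positivity
  by_cases hcase : 2 / s ≤ p
  · -- large p : LHS ≤ p
    have hc' : c ≤ 1 - s ^ 2 / 2 := by
      nlinarith [sq_nonneg (s ^ 2), sq_nonneg (1 - s ^ 2 / 2 + c)]
    have hlhs : s + p * c ≤ p := by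
      have h2 : 2 ≤ p * s := by
        rw [div_le_iff₀ hs0] at hcase; linarith [mul_comm p s]
      nlinarith
    calc s + p * c ≤ p := hlhs
      _ = (p ^ (2 + β)) ^ (2 + β)⁻¹ := (Real.rpow_rpow_inv hp0.le hα0.ne').symm
      _ ≤ (p ^ (2 + β) + (2 : ℝ) ^ β * K / s ^ β) ^ (2 + β)⁻¹ := by
          apply Real.rpow_le_rpow (by positivity) (by linarith) (by positivity)
  · -- small p : s ≤ 2/p
    push_neg at hcase
    have hsp : s ≤ 2 / p := by
      rw [lt_div_iff₀ hs0] at hcase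
      rw [le_div_iff₀ hp0]; nlinarith
    have hb0 : (0:ℝ) < p + 2 / p := by positivity
    set b : ℝ := p + 2 / p with hbdef
    -- Bernoulli gives b^(2+β) ≤ p^(2+β) + K * p^β
    have hneg : (-1:ℝ) ≤ (p - b) / b := by
      rw [neg_le, ← neg_div, neg_sub, div_le_one hb0, hbdef]
      have h2p : (0:ℝ) < 2 / p := by positivity
      linarith
    have hber := one_add_mul_self_le_rpow_one_add hneg (by linarith : (1:ℝ) ≤ 2 + β)
    have h1 : 1 + (p - b) / b = p / b := by field_simp; ring
    rw [h1, Real.div_rpow hp0.le hb0.le] at hber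
    -- hber : 1 + (2+β) * ((p - b)/b) ≤ p^(2+β) / b^(2+β)
    have hbpow0 : (0:ℝ) < b ^ (2 + β) := Real.rpow_pos_of_pos hb0 _
    have hdiff : b ^ (2 + β) - p ^ (2 + β) ≤ (2 + β) * (2 / p) * (b ^ (2 + β) / b) := by
      have h2 : b ^ (2 + β) * (1 + (2 + β) * ((p - b) / b)) ≤ p ^ (2 + β) := by
        calc b ^ (2 + β) * (1 + (2 + β) * ((p - b) / b))
            ≤ b ^ (2 + β) * (p ^ (2 + β) / b ^ (2 + β)) := by
              exact mul_le_mul_of_nonneg_left hber hbpow0.le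
          _ = p ^ (2 + β) := by field_simp
      have hbp : b - p = 2 / p := by rw [hbdef]; ring
      have heq : b ^ (2 + β) * (1 + (2 + β) * ((p - b) / b))
          = b ^ (2 + β) - (2 + β) * (2 / p) * (b ^ (2 + β) / b) := by
        rw [← hbp]; field_simp; ring
      rw [heq] at h2; linarith
    have hbdiv : b ^ (2 + β) / b = b ^ (1 + β) := by
      rw [show (1:ℝ) + β = 2 + β - 1 by ring, Real.rpow_sub hb0, Real.rpow_one]
    have hbval : b = p * (1 + 2 / p ^ 2) := by rw [hbdef]; field_simp
    have hbpow : b ^ (1 + β) ≤ p ^ (1 + β) * M := by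
      rw [hbval, Real.mul_rpow hp0.le (by positivity)]
      apply mul_le_mul_of_nonneg_left _ (by positivity)
      rw [hM]
      apply Real.rpow_le_rpow (by positivity) _ (by positivity)
      have h2 : δ ^ 2 ≤ p ^ 2 := by nlinarith
      have h3 : 2 / p ^ 2 ≤ 2 / δ ^ 2 :=
        div_le_div_of_nonneg_left (by norm_num) (by positivity) h2
      linarith
    have hp1β : p ^ (1 + β) = p * p ^ β := by
      rw [Real.rpow_add hp0, Real.rpow_one]
    have hdiff2 : b ^ (2 + β) - p ^ (2 + β) ≤ K * p ^ β := by
      rw [hbdiv] at hdiff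
      calc b ^ (2 + β) - p ^ (2 + β) ≤ (2 + β) * (2 / p) * (p ^ (1 + β) * M) := by
            refine hdiff.trans (mul_le_mul_of_nonneg_left hbpow (by positivity))
        _ = K * p ^ β := by rw [hp1β, hK]; field_simp
    -- relate K * p^β and C / s^β
    have hsβ : s ^ β ≤ (2 / p) ^ β := Real.rpow_le_rpow hs0.le hsp hβ.le
    have hCK : K * p ^ β ≤ (2 : ℝ) ^ β * K / s ^ β := by
      have h2p : (2 / p : ℝ) ^ β = 2 ^ β / p ^ β := Real.div_rpow (by norm_num) hp0.le β
      have hsβ0 : (0:ℝ) < s ^ β := Real.rpow_pos_of_pos hs0 _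
      have hpβ0 : (0:ℝ) < p ^ β := Real.rpow_pos_of_pos hp0 _
      have key : K * p ^ β = 2 ^ β * K / ((2 / p) ^ β) := by
        rw [h2p]; field_simp
      rw [key]
      exact div_le_div_of_nonneg_left (by positivity) hsβ0 hsβ
    have hmain : b ^ (2 + β) ≤ p ^ (2 + β) + (2 : ℝ) ^ β * K / s ^ β := by
      linarith
    calc s + p * c ≤ b := by
          rw [hbdef]
          have h4 : p * c ≤ p := mul_le_of_le_one_right hp0.le hc1
          linarith
      _ = (b ^ (2 + β)) ^ (2 + β)⁻¹ := (Real.rpow_rpow_inv hb0.le hα0.ne').symm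
      _ ≤ (p ^ (2 + β) + (2 : ℝ) ^ β * K / s ^ β) ^ (2 + β)⁻¹ :=
          Real.rpow_le_rpow hbpow0.le hmain (by positivity)
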